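/- Fix 0 ≤ γ < 3, λ > 0, X₀ ∈ ℝⁿ, and r ≥ 0. Set α = 4/(3-γ) and τ = (λ(3-γ)^4/(64(1+γ)))^{1/(3-γ)}. Define u(X) = τ · (max(|X - X₀| - r, 0))^α. Then for every X with |X - X₀| > r, u is twice differentiable at X and satisfies Δ_∞ u(X) = λ · u(X)^γ, and for every X with |X - X₀| < r, u is differentiable at X with ∇u(X) = 0 and u(X) = 0. -/

import Mathlib

open scoped RealInnerProductSpace

lemma norm_sub_hasFDerivAt {n : ℕ} (X₀ Y : EuclideanSpace ℝ (Fin n)) (h : Y ≠ X₀) :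
    HasFDerivAt (fun Z => ‖Z - X₀‖) (innerSL ℝ ((‖Y - X₀‖)⁻¹ • (Y - X₀))) Y := by
  have hv : Y - X₀ ≠ 0 := sub_ne_zero.2 h
  have hs : 0 < ‖Y - X₀‖ := norm_pos_iff.2 hv
  have hsub : HasFDerivAt (fun Z : EuclideanSpace ℝ (Fin n) => Z - X₀)
      (ContinuousLinearMap.id ℝ _) Y := (hasFDerivAt_id Y).sub_const X₀
  have hq : HasFDerivAt (fun Z : EuclideanSpace ℝ (Fin n) => (⟪Z - X₀, Z - X₀⟫ : ℝ))
      ((fderivInnerCLM ℝ (Y - X₀, Y - X₀)).comp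
        ((ContinuousLinearMap.id ℝ _).prod (ContinuousLinearMap.id ℝ _))) Y :=
    HasFDerivAt.inner ℝ hsub hsub
  have hqY : (⟪Y - X₀, Y - X₀⟫ : ℝ) = ‖Y - X₀‖ ^ 2 := real_inner_self_eq_norm_sq _
  have hsqrt : HasDerivAt Real.sqrt (1 / (2 * Real.sqrt (⟪Y - X₀, Y - X₀⟫ : ℝ)))
      ((fun Z : EuclideanSpace ℝ (Fin n) => (⟪Z - X₀, Z - X₀⟫ : ℝ)) Y) := by
    apply Real.hasDerivAt_sqrt
    rw [hqY]
    positivity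
  have hcomp := hsqrt.comp_hasFDerivAt Y hq
  have heq : (Real.sqrt ∘ fun Z : EuclideanSpace ℝ (Fin n) => (⟪Z - X₀, Z - X₀⟫ : ℝ))
      = fun Z => ‖Z - X₀‖ := by
    funext Z
    simp only [Function.comp_apply]
    rw [real_inner_self_eq_norm_sq, Real.sqrt_sq (norm_nonneg _)]
  rw [heq, hqY, Real.sqrt_sq (norm_nonneg _)] at hcomp
  have hclm : ((1 / (2 * ‖Y - X₀‖)) • ((fderivInnerCLM ℝ (Y - X₀, Y - X₀)).comp
        ((ContinuousLinearMap.id ℝ (EuclideanSpace ℝ (Fin n))).prod (ContinuousLinearMap.id ℝ _))))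
      = innerSL ℝ ((‖Y - X₀‖)⁻¹ • (Y - X₀)) := by
    ext w
    simp only [ContinuousLinearMap.smul_apply, ContinuousLinearMap.coe_comp',
      Function.comp_apply, ContinuousLinearMap.prod_apply, ContinuousLinearMap.coe_id',
      id_eq, fderivInnerCLM_apply, innerSL_apply_apply, smul_eq_mul]
    rw [real_inner_comm w (Y - X₀), real_inner_smul_left]
    set t := (⟪Y - X₀, w⟫ : ℝ)
    rw [one_div, mul_inv]
    ring_nf
    rw [real_inner_comm]
  rwa [hclm] at hcomp

lemma u_hasGradientAt {n : ℕ} (τ α r : ℝ) (hr : 0 ≤ r)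
    (X₀ Y : EuclideanSpace ℝ (Fin n)) (hY : r < ‖Y - X₀‖) :
    HasGradientAt (fun X => τ * (max (‖X - X₀‖ - r) 0) ^ α)
      ((τ * α * (‖Y - X₀‖ - r) ^ (α - 1) * (‖Y - X₀‖)⁻¹) • (Y - X₀)) Y := by
  have hs : 0 < ‖Y - X₀‖ := lt_of_le_of_lt hr hY
  have hne : Y ≠ X₀ := by
    intro hYX
    rw [hYX, sub_self, norm_zero] at hs
    exact lt_irrefl _ hs
  have hp : 0 < ‖Y - X₀‖ - r := sub_pos.2 hY
  have hN := norm_sub_hasFDerivAt X₀ Y hne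
  have h1 : HasDerivAt (fun t : ℝ => t - r) 1 ‖Y - X₀‖ := (hasDerivAt_id _).sub_const r
  have h2 := (Real.hasDerivAt_rpow_const (p := α) (Or.inl hp.ne')).comp ‖Y - X₀‖ h1
  simp only [Function.comp_def] at h2
  have hg : HasDerivAt (fun t : ℝ => τ * (t - r) ^ α)
      (τ * (α * (‖Y - X₀‖ - r) ^ (α - 1) * 1)) ‖Y - X₀‖ := h2.const_mul τ
  have hcomp := hg.comp_hasFDerivAt Y hN
  have hopen : IsOpen {Z : EuclideanSpace ℝ (Fin n) | r < ‖Z - X₀‖} :=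
    isOpen_lt continuous_const ((continuous_id.sub continuous_const).norm)
  have hev : (fun Z : EuclideanSpace ℝ (Fin n) => τ * (max (‖Z - X₀‖ - r) 0) ^ α)
      =ᶠ[nhds Y] (fun Z => τ * (‖Z - X₀‖ - r) ^ α) := by
    filter_upwards [hopen.mem_nhds hY] with Z hZ
    rw [max_eq_left (le_of_lt (sub_pos.2 hZ))]
  have hcomp' := hcomp.congr_of_eventuallyEq hev
  rw [hasGradientAt_iff_hasFDerivAt]
  convert hcomp' using 1
  · rfl
  ext w
  simp only [InnerProductSpace.toDual_apply_apply, real_inner_smul_left,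
    ContinuousLinearMap.smul_apply, innerSL_apply_apply, smul_eq_mul]
  ring

lemma scalar_key (γ lam α τ p : ℝ) (hγ0 : 0 ≤ γ) (hγ3 : γ < 3) (hlam : 0 < lam) (hp : 0 < p)
    (hα : α = 4 / (3 - γ))
    (hτ : τ = (lam * (3 - γ) ^ 4 / (64 * (1 + γ))) ^ ((1 : ℝ) / (3 - γ))) :
    (τ * α * p ^ (α - 1)) * (τ * α * p ^ (α - 1)) * (τ * α * (α - 1) * p ^ (α - 2))
      = lam * (τ * p ^ α) ^ γ := by
  have h3γ : (0 : ℝ) < 3 - γ := by linarith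
  have h1γ : (0 : ℝ) < 1 + γ := by linarith
  have hK : 0 < lam * (3 - γ) ^ 4 / (64 * (1 + γ)) := by positivity
  have hτpos : 0 < τ := by rw [hτ]; exact Real.rpow_pos_of_pos hK _
  have hτ3γ : τ ^ (3 - γ) = lam * (3 - γ) ^ 4 / (64 * (1 + γ)) := by
    rw [hτ, ← Real.rpow_mul hK.le, one_div, inv_mul_cancel₀ h3γ.ne', Real.rpow_one]
  have hppow : p ^ (α - 1) * p ^ (α - 1) * p ^ (α - 2) = p ^ (α * γ) := by
    rw [← Real.rpow_add hp, ← Real.rpow_add hp]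
    congr 1
    rw [hα]
    field_simp
    ring
  have hτττ : τ * τ * τ = τ ^ γ * τ ^ (3 - γ) := by
    rw [← Real.rpow_add hτpos]
    norm_num
    ring
  have hαcoef : (lam * (3 - γ) ^ 4 / (64 * (1 + γ))) * (α * α * α * (α - 1)) = lam := by
    rw [hα]
    field_simp
    ring
  have hrhs : (τ * p ^ α) ^ γ = τ ^ γ * p ^ (α * γ) := by
    rw [Real.mul_rpow hτpos.le (Real.rpow_nonneg hp.le _), ← Real.rpow_mul hp.le]
  rw [hrhs]
  calc (τ * α * p ^ (α - 1)) * (τ * α * p ^ (α - 1)) * (τ * α * (α - 1) * p ^ (α - 2))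
      = (τ * τ * τ) * (α * α * α * (α - 1)) * (p ^ (α - 1) * p ^ (α - 1) * p ^ (α - 2)) := by ring
    _ = (τ ^ γ * τ ^ (3 - γ)) * (α * α * α * (α - 1)) * p ^ (α * γ) := by rw [hτττ, hppow]
    _ = τ ^ γ * ((lam * (3 - γ) ^ 4 / (64 * (1 + γ))) * (α * α * α * (α - 1))) * p ^ (α * γ) := by
        rw [hτ3γ]; ring
    _ = lam * (τ ^ γ * p ^ (α * γ)) := by rw [hαcoef]; ring
/-- The infinity Laplacian `Δ_∞ u (X) = ⟨D²u(X) · ∇u(X), ∇u(X)⟩`. -/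
noncomputable def infinityLaplacian {n : ℕ} (u : EuclideanSpace ℝ (Fin n) → ℝ)
    (X : EuclideanSpace ℝ (Fin n)) : ℝ :=
  ⟪fderiv ℝ (gradient u) X (gradient u X), gradient u X⟫
theorem dead_core_radial_solution
    {n : ℕ} (γ lam α τ r : ℝ) (hγ0 : 0 ≤ γ) (hγ3 : γ < 3) (hlam : 0 < lam)
    (hr : 0 ≤ r)
    (hα : α = 4 / (3 - γ))
    (hτ : τ = (lam * (3 - γ) ^ 4 / (64 * (1 + γ))) ^ ((1 : ℝ) / (3 - γ)))
    (X₀ : EuclideanSpace ℝ (Fin n))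
    (u : EuclideanSpace ℝ (Fin n) → ℝ)
    (hu : ∀ X, u X = τ * (max (‖X - X₀‖ - r) 0) ^ α) :
    (∀ X : EuclideanSpace ℝ (Fin n), r < ‖X - X₀‖ →
      DifferentiableAt ℝ u X ∧ DifferentiableAt ℝ (gradient u) X ∧
        infinityLaplacian u X = lam * (u X) ^ γ) ∧
    (∀ X : EuclideanSpace ℝ (Fin n), ‖X - X₀‖ < r →
      DifferentiableAt ℝ u X ∧ gradient u X = 0 ∧ u X = 0) := by
  have h3γ : (0 : ℝ) < 3 - γ := by linarith
  have hαpos : 0 < α := by rw [hα]; positivity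
  have huf : u = fun X => τ * (max (‖X - X₀‖ - r) 0) ^ α := funext hu
  constructor
  · intro X hX
    have hs : 0 < ‖X - X₀‖ := lt_of_le_of_lt hr hX
    have hne : X ≠ X₀ := by
      intro h; rw [h, sub_self, norm_zero] at hs; exact lt_irrefl _ hs
    have hp : 0 < ‖X - X₀‖ - r := sub_pos.2 hX
    have hugrad : ∀ Z, r < ‖Z - X₀‖ → HasGradientAt u
        ((τ * α * (‖Z - X₀‖ - r) ^ (α - 1) * (‖Z - X₀‖)⁻¹) • (Z - X₀)) Z := by
      intro Z hZ
      rw [huf]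
      exact u_hasGradientAt τ α r hr X₀ Z hZ
    have hdiffu : DifferentiableAt ℝ u X := ((hugrad X hX).hasFDerivAt).differentiableAt
    have hopen : IsOpen {Z : EuclideanSpace ℝ (Fin n) | r < ‖Z - X₀‖} :=
      isOpen_lt continuous_const ((continuous_id.sub continuous_const).norm)
    have hgev : gradient u =ᶠ[nhds X]
        (fun Z => (τ * α * (‖Z - X₀‖ - r) ^ (α - 1) * (‖Z - X₀‖)⁻¹) • (Z - X₀)) := by
      filter_upwards [hopen.mem_nhds hX] with Z hZ
      exact (hugrad Z hZ).gradient
    have hN := norm_sub_hasFDerivAt X₀ X hne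
    have h1 : HasDerivAt (fun t : ℝ => t - r) 1 ‖X - X₀‖ := (hasDerivAt_id _).sub_const r
    have h2 := (Real.hasDerivAt_rpow_const (p := α - 1) (Or.inl hp.ne')).comp ‖X - X₀‖ h1
    simp only [Function.comp_def] at h2
    have h3 := h2.const_mul (τ * α)
    have h4 : HasDerivAt (fun t : ℝ => t⁻¹) (-(‖X - X₀‖ ^ 2)⁻¹) ‖X - X₀‖ := hasDerivAt_inv hs.ne'
    have h5 := h3.mul h4
    have hcN := h5.comp_hasFDerivAt X hN
    have hid : HasFDerivAt (fun Z : EuclideanSpace ℝ (Fin n) => Z - X₀)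
        (ContinuousLinearMap.id ℝ _) X := (hasFDerivAt_id X).sub_const X₀
    have hGd := hcN.smul hid
    refine ⟨hdiffu, ?_, ?_⟩
    · exact hgev.differentiableAt_iff.2 hGd.differentiableAt
    · have hgradX : gradient u X
          = (τ * α * (‖X - X₀‖ - r) ^ (α - 1) * (‖X - X₀‖)⁻¹) • (X - X₀) :=
        (hugrad X hX).gradient
      have hfd := hgev.fderiv_eq.trans hGd.fderiv
      rw [infinityLaplacian, hgradX, hfd]
      simp only [ContinuousLinearMap.add_apply, ContinuousLinearMap.smul_apply,
        ContinuousLinearMap.coe_id', id_eq, ContinuousLinearMap.smulRight_apply,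
        Function.comp_apply, Pi.mul_apply,
        innerSL_apply_apply, inner_add_left, real_inner_smul_left, real_inner_smul_right,
        smul_eq_mul, real_inner_self_eq_norm_sq]
      rw [hu X, max_eq_left hp.le]
      have key := scalar_key γ lam α τ (‖X - X₀‖ - r) hγ0 hγ3 hlam hp hα hτ
      rw [← key]
      field_simp
      ring
  · intro X hX
    have hopen : IsOpen {Z : EuclideanSpace ℝ (Fin n) | ‖Z - X₀‖ < r} :=
      isOpen_lt ((continuous_id.sub continuous_const).norm) continuous_const
    have hev : u =ᶠ[nhds X] (fun _ => (0 : ℝ)) := by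
      filter_upwards [hopen.mem_nhds hX] with Z hZ
      rw [hu Z, max_eq_right (by linarith : ‖Z - X₀‖ - r ≤ 0), Real.zero_rpow hαpos.ne',
        mul_zero]
    refine ⟨?_, ?_, ?_⟩
    · exact hev.differentiableAt_iff.2 (differentiableAt_const 0)
    · have h0 : gradient u X = gradient (fun _ : EuclideanSpace ℝ (Fin n) => (0 : ℝ)) X :=
        hev.gradient_eq
      rw [h0, gradient_fun_const]
    · rw [hu X, max_eq_right (by linarith : ‖X - X₀‖ - r ≤ 0), Real.zero_rpow hαpos.ne',
        mul_zero]
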